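/- In the encoding of Turing Machines into synchronous polyadic π-calculus, the process representing the current state q_i and tape, namely q_i s_h⟨l,r⟩.0 | ⟦…,b,s_a,…,s_g⟧_L | ⟦s_i,…,s_j,b,…⟧_R (where ⟦…⟧_L and ⟦…⟧_R are the chained-channel encodings of the left and right parts of the tape), does not reduce. -/

import Mathlib

open scoped Classical

noncomputable section



namespace ACPC

/-- Names: a countable collection. -/
abbrev Name := ℕ

/-- Shape functor for (possibly infinite) ACPC terms: leaves labelled by a name,
or binary compound nodes. -/
def TermP : PFunctor.{0} :=
  ⟨Option Name, fun o => match o with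
    | some _ => Empty
    | none => Bool⟩

/-- ACPC terms: names and compounds `s • t`, possibly infinite (coinductive trees). -/
def Term : Type := TermP.M

namespace Term

/-- The term consisting of a single name. -/
def name (n : Name) : Term := PFunctor.M.mk ⟨some n, fun e => e.elim⟩

/-- The compound `s • t` of two terms. -/
def comp (s t : Term) : Term := PFunctor.M.mk ⟨none, fun b => bif b then t else s⟩

/-- `Occurs n t` : the name `n` occurs (at some finite depth) in the term `t`. -/
inductive Occurs (n : Name) : Term → Prop
  | name : Occurs n (Term.name n)
  | compL {s t : Term} : Occurs n s → Occurs n (Term.comp s t)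
  | compR {s t : Term} : Occurs n t → Occurs n (Term.comp s t)

/-- Free names of a term. -/
def fn (t : Term) : Set Name := {n | Occurs n t}

/-- Rename every name occurring in a term. -/
def renameStep (f : Name → Name) (s : Term) : TermP.Obj Term :=
  match PFunctor.M.dest s with
  | ⟨some n, _⟩ => ⟨some (f n), fun e => e.elim⟩
  | ⟨none, g⟩ => ⟨none, g⟩

def rename (f : Name → Name) (t : Term) : Term :=
  PFunctor.M.corec (renameStep f) t

end Term

/-- Substitutions: partial maps from names to terms. -/
def Subst : Type := Name → Option Term

namespace Subst

/-- The empty substitution `{}`. -/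
def empty : Subst := fun _ => none

/-- The singleton substitution `{t/n}`. -/
def single (n : Name) (t : Term) : Subst := fun m => if m = n then some t else none

/-- Union of two substitutions (left-biased; applied to disjoint domains). -/
def union (σ ρ : Subst) : Subst := fun n =>
  match σ n with
  | some t => some t
  | none => ρ n

/-- The domain of a substitution. -/
def dom (σ : Subst) : Set Name := {n | σ n ≠ none}

/-- Remove a set of names from the domain of a substitution. -/
def removeSet (σ : Subst) (s : Set Name) : Subst := fun n => if n ∈ s then none else σ n

end Subst

/-- Applying a substitution to a (possibly infinite) term, replacing named leaves
by the corresponding terms. -/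
def Term.substStep (σ : Subst) (x : Term × Bool) : TermP.Obj (Term × Bool) :=
  match PFunctor.M.dest x.1, x.2 with
  | ⟨some n, _⟩, true => ⟨some n, fun e => e.elim⟩
  | ⟨some n, _⟩, false =>
      match σ n with
      | some u =>
          match PFunctor.M.dest u with
          | ⟨a, g⟩ => ⟨a, fun b => (g b, true)⟩
      | none => ⟨some n, fun e => e.elim⟩
  | ⟨none, g⟩, v => ⟨none, fun b => (g b, v)⟩

/-- Applying a substitution to a (possibly infinite) term. -/
def Term.subst (σ : Subst) (t : Term) : Term :=
  PFunctor.M.corec (Term.substStep σ) (t, false)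

/-- ACPC patterns: binding names `λn`, name-matches `n`, and compounds `p • q`. -/
inductive Pattern : Type
  | bind (n : Name)
  | nmatch (n : Name)
  | comp (p q : Pattern)

namespace Pattern

/-- Binding names of a pattern. -/
def bn : Pattern → Finset Name
  | bind n => {n}
  | nmatch _ => ∅
  | comp p q => p.bn ∪ q.bn

/-- Name-matches of a pattern. -/
def nm : Pattern → Finset Name
  | bind _ => ∅
  | nmatch n => {n}
  | comp p q => p.nm ∪ q.nm

/-- Well-formed patterns: each binding name occurs at most once. -/
def wf : Pattern → Prop
  | bind _ => True
  | nmatch _ => True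
  | comp p q => p.wf ∧ q.wf ∧ Disjoint p.bn q.bn

/-- Rename only the binding names of a pattern. -/
def renameBn (f : Name → Name) : Pattern → Pattern
  | bind n => bind (f n)
  | nmatch n => nmatch n
  | comp p q => comp (p.renameBn f) (q.renameBn f)

/-- Rename all the names of a pattern. -/
def rename (f : Name → Name) : Pattern → Pattern
  | bind n => bind (f n)
  | nmatch n => nmatch (f n)
  | comp p q => comp (p.rename f) (q.rename f)

/-- Apply a substitution to the name-matches of a pattern (a name-match is
replaced only when the substitution maps it to a name). -/
def subst (σ : Subst) : Pattern → Pattern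
  | bind n => bind n
  | nmatch n =>
      match σ n with
      | some u =>
          match (PFunctor.M.dest u).1 with
          | some m => nmatch m
          | none => nmatch n
      | none => nmatch n
  | comp p q => comp (p.subst σ) (q.subst σ)

end Pattern

/-- The matching `{t // p}` of a term `t` against a pattern `p`, yielding a
substitution: `{t // λn} = {t/n}`, `{n // n} = {}`, and compounds match
componentwise; undefined (no derivation) otherwise. -/
inductive Matches : Term → Pattern → Subst → Prop
  | bind (t : Term) (n : Name) : Matches t (.bind n) (Subst.single n t)
  | nmatch (n : Name) : Matches (Term.name n) (.nmatch n) Subst.empty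
  | comp {s t : Term} {p q : Pattern} {σ ρ : Subst} :
      Matches s p σ → Matches t q ρ →
      Matches (Term.comp s t) (.comp p q) (σ.union ρ)

/-- ACPC processes. -/
inductive Proc : Type
  | nil
  | par (P Q : Proc)
  | rep (P : Proc)
  | res (n : Name) (P : Proc)
  | inp (p : Pattern) (P : Proc)
  | out (t : Term) (P : Proc)

namespace Proc

/-- Free names of a process. -/
def fn : Proc → Set Name
  | nil => ∅
  | par P Q => P.fn ∪ Q.fn
  | rep P => P.fn
  | res n P => P.fn \ {n}
  | inp p P => ↑p.nm ∪ (P.fn \ ↑p.bn)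
  | out t P => t.fn ∪ P.fn

/-- Rename all names of a process (including binders). -/
def rename (f : Name → Name) : Proc → Proc
  | nil => nil
  | par P Q => par (P.rename f) (Q.rename f)
  | rep P => rep (P.rename f)
  | res n P => res (f n) (P.rename f)
  | inp p P => inp (p.rename f) (P.rename f)
  | out t P => out (t.rename f) (P.rename f)

/-- Apply a substitution to a process. -/
def subst (σ : Subst) : Proc → Proc
  | nil => nil
  | par P Q => par (P.subst σ) (Q.subst σ)
  | rep P => rep (P.subst σ)
  | res n P => res n (P.subst (σ.removeSet {n}))
  | inp p P => inp (p.subst (σ.removeSet ↑p.bn)) (P.subst (σ.removeSet ↑p.bn))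
  | out t P => out (t.subst σ) (P.subst σ)

end Proc

/-- The transposition of two names. -/
def transp (a b : Name) : Name → Name := fun n => if n = a then b else if n = b then a else n

/-- α-conversion: renaming of a bound name via a fresh transposition. -/
inductive AlphaEq : Proc → Proc → Prop
  | res {a b : Name} {P : Proc} :
      b ∉ P.fn → AlphaEq (.res a P) (.res b (P.rename (transp a b)))
  | inp {p : Pattern} {P : Proc} {m b : Name} :
      m ∈ p.bn → b ∉ p.bn → b ∉ (Proc.inp p P).fn →
      AlphaEq (.inp p P) (.inp (p.renameBn (transp m b)) (P.rename (transp m b)))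

/-- Structural equivalence of ACPC processes. -/
inductive StructEq : Proc → Proc → Prop
  | refl (P) : StructEq P P
  | symm {P Q} : StructEq P Q → StructEq Q P
  | trans {P Q R} : StructEq P Q → StructEq Q R → StructEq P R
  | alpha {P Q} : AlphaEq P Q → StructEq P Q
  | par_nil (P) : StructEq (.par P .nil) P
  | par_comm (P Q) : StructEq (.par P Q) (.par Q P)
  | par_assoc (P Q R) : StructEq (.par P (.par Q R)) (.par (.par P Q) R)
  | res_nil (a) : StructEq (.res a .nil) .nil
  | res_res (a b P) : StructEq (.res a (.res b P)) (.res b (.res a P))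
  | res_par {a : Name} (P Q) : a ∉ Proc.fn P → StructEq (.par P (.res a Q)) (.res a (.par P Q))
  | rep (P) : StructEq (.rep P) (.par P (.rep P))
  | par_congr {P P' Q Q'} : StructEq P P' → StructEq Q Q' → StructEq (.par P Q) (.par P' Q')
  | res_congr {P P'} (a) : StructEq P P' → StructEq (.res a P) (.res a P')
  | rep_congr {P P'} : StructEq P P' → StructEq (.rep P) (.rep P')
  | inp_congr {P P'} (p) : StructEq P P' → StructEq (.inp p P) (.inp p P')
  | out_congr {P P'} (t) : StructEq P P' → StructEq (.out t P) (.out t P')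

/-- Reduction of ACPC processes: generated by the interaction axiom, closed
under parallel composition, restriction and structural equivalence. -/
inductive Reduces : Proc → Proc → Prop
  | interact {t : Term} {P : Proc} {q : Pattern} {Q : Proc} {σ : Subst} :
      Matches t q σ → Reduces (.par (.out t P) (.inp q Q)) (.par P (Q.subst σ))
  | par {P P' : Proc} (Q) : Reduces P P' → Reduces (.par P Q) (.par P' Q)
  | res {P P'} (n) : Reduces P P' → Reduces (.res n P) (.res n P')
  | struct {P P' Q Q'} : StructEq P P' → Reduces P' Q' → StructEq Q' Q → Reduces P Q

end ACPC
namespace ACPC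

/-- Directions for a Turing Machine head. -/
inductive Dir : Type
  | L
  | R

/-- Transition tuples `⟨q₁, s₂, s₃, d₄, q₅⟩`. -/
abbrev Tuple := Name × Name × Name × Dir × Name

/-- A Turing Machine: a finite alphabet of symbols (containing the blank),
a finite set of states, and a transition function given as a finite set of
tuples; states and symbols are (distinct) names. -/
structure Machine where
  symbols : Finset Name
  blank : Name
  blank_mem : blank ∈ symbols
  states : Finset Name
  states_symbols : Disjoint states symbols
  trans : Finset Tuple
  trans_mem : ∀ u ∈ trans,
    u.1 ∈ states ∧ u.2.1 ∈ symbols ∧ u.2.2.1 ∈ symbols ∧ u.2.2.2.2 ∈ states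

/-- A two-sided infinite tape with a designated current head position:
`left i` is the cell `i+1` steps to the left of the head, `head` the current
cell, and `right i` the cell `i+1` steps to the right. -/
structure Tape where
  left : ℕ → Name
  head : Name
  right : ℕ → Name

/-- The tape only carries symbols of the machine. -/
def Tape.InAlphabet (M : Machine) (T : Tape) : Prop :=
  (∀ i, T.left i ∈ M.symbols) ∧ T.head ∈ M.symbols ∧ (∀ i, T.right i ∈ M.symbols)

/-- The tape is blank outside a finite region. -/
def Tape.FinitelyNonBlank (b : Name) (T : Tape) : Prop :=
  ∃ N, ∀ i, N ≤ i → T.left i = b ∧ T.right i = b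

/-- Write the symbol `s₂` at the head position and move in direction `d`. -/
def Tape.step (T : Tape) (s₂ : Name) : Dir → Tape
  | .L => ⟨fun i => T.left (i + 1), T.left 0,
      fun i => match i with | 0 => s₂ | (j + 1) => T.right j⟩
  | .R => ⟨fun i => match i with | 0 => s₂ | (j + 1) => T.left j,
      T.right 0, fun i => T.right (i + 1)⟩

/-- The transition relation of a Turing Machine on configurations (tape, current
state): a tuple of the transition function applies to the current state and the
symbol under the head. -/
inductive Machine.Step (M : Machine) : Tape × Name → Tape × Name → Prop
  | mk {T : Tape} {q s₂ q' : Name} {d : Dir} :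
      (q, T.head, s₂, d, q') ∈ M.trans →
      Machine.Step M (T, q) (T.step s₂ d, q')

/-- Parallel composition of a list of processes. -/
def bigPar : List Proc → Proc
  | [] => .nil
  | P :: Ps => .par P (bigPar Ps)

/-! ### The infinite-term encoding -/

/-- Encoding of one side of the tape (listed from the head outward) as an
infinite term `s₁ • (s₂ • (s₃ • …))`. -/
def encodeSide (f : ℕ → Name) : Term :=
  PFunctor.M.corec
    (fun (x : ℕ ⊕ Name) =>
      (match x with
      | .inl k => ⟨none, fun b => bif b then Sum.inl (k + 1) else Sum.inr (f k)⟩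
      | .inr m => ⟨some m, fun e => e.elim⟩ : TermP.Obj (ℕ ⊕ Name)))
    (Sum.inl 0)

/-- Encoding `[[T]] = L • s_h • R` of a tape (with `•` associated to the right). -/
def encodeTape (T : Tape) : Term :=
  .comp (encodeSide T.left) (.comp (.name T.head) (encodeSide T.right))

/-- Encoding of a transition tuple as an ACPC input process, using the four
reserved names `l`, `l1`, `r`, `r1`. -/
def encodeTuple (l l1 r r1 : Name) : Tuple → Proc
  | (qi, s1, s2, .L, qj) =>
      .inp (.comp (.nmatch qi)
              (.comp (.comp (.bind l1) (.bind l)) (.comp (.nmatch s1) (.bind r))))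
        (.out (.comp (.name qj)
                (.comp (.name l) (.comp (.name l1) (.comp (.name s2) (.name r))))) .nil)
  | (qi, s1, s2, .R, qj) =>
      .inp (.comp (.nmatch qi)
              (.comp (.bind l) (.comp (.nmatch s1) (.comp (.bind r1) (.bind r)))))
        (.out (.comp (.name qj)
                (.comp (.comp (.name s2) (.name l)) (.comp (.name r1) (.name r)))) .nil)

/-- Encoding `[[F]] = ∏_{u ∈ F} ![[u]]` of the transition function. -/
def encodeTrans (l l1 r r1 : Name) (F : Finset Tuple) : Proc :=
  bigPar (F.toList.map fun u => .rep (encodeTuple l l1 r r1 u))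

/-- Encoding of a Turing Machine configuration:
`[[(S,Q,F,T,q)]] = ⟨q • [[T]]⟩0 | [[F]]`. -/
def encodeTM (l l1 r r1 : Name) (M : Machine) (T : Tape) (q : Name) : Proc :=
  .par (.out (.comp (.name q) (encodeTape T)) .nil) (encodeTrans l l1 r r1 M.trans)

/-- The four reserved names are pairwise distinct and do not appear among the
symbols of the machine. -/
def Reserved (M : Machine) (l l1 r r1 : Name) : Prop :=
  l ∉ M.symbols ∧ l1 ∉ M.symbols ∧ r ∉ M.symbols ∧ r1 ∉ M.symbols ∧
    l ≠ l1 ∧ l ≠ r ∧ l ≠ r1 ∧ l1 ≠ r ∧ l1 ≠ r1 ∧ r ≠ r1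

/-! ### The finite-term encoding -/

/-- `listToTerm [s₁, …, sᵢ] e = s₁ • (s₂ • (… • (sᵢ • e)))`. -/
def listToTerm (L : List Name) (e : Name) : Term :=
  L.foldr (fun s t => Term.comp (Term.name s) t) (Term.name e)

/-- Finite encoding of one side of the tape (listed from the head outward):
the cells up to the last non-blank one, with the edge name `e` in place of the
remaining infinite sequence of blanks. -/
def encodeSideFin (b e : Name) (f : ℕ → Name) : Term :=
  if h : ∃ N, ∀ i, N ≤ i → f i = b then
    listToTerm ((List.range (Nat.find h)).map f) e
  else Term.name e

/-- Finite encoding `[[T]] = L • s_h • R` of a tape. -/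
def encodeTapeFin (b e : Name) (T : Tape) : Term :=
  .comp (encodeSideFin b e T.left) (.comp (.name T.head) (encodeSideFin b e T.right))

/-- The pattern of the first (main) replicated input in the finite encoding of
a transition tuple. -/
def finInputPat1 (l l1 r r1 : Name) : Tuple → Pattern
  | (qi, s1, _, .L, _) =>
      .comp (.nmatch qi) (.comp (.comp (.bind l1) (.bind l)) (.comp (.nmatch s1) (.bind r)))
  | (qi, s1, _, .R, _) =>
      .comp (.nmatch qi) (.comp (.bind l) (.comp (.nmatch s1) (.comp (.bind r1) (.bind r))))

/-- The pattern of the second (edge-detecting) replicated input in the finite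
encoding of a transition tuple. -/
def finInputPat2 (e l l1 r r1 : Name) : Tuple → Pattern
  | (qi, s1, _, .L, _) =>
      .comp (.nmatch qi) (.comp (.nmatch e) (.comp (.nmatch s1) (.bind r)))
  | (qi, s1, _, .R, _) =>
      .comp (.nmatch qi) (.comp (.bind l) (.comp (.nmatch s1) (.nmatch e)))

/-- Finite encoding of a transition tuple: two replicated inputs in parallel,
the first as in the infinite encoding and the second detecting the edge `e` of
the tape and inserting a new blank `b`. -/
def encodeTupleFin (b e l l1 r r1 : Name) : Tuple → Proc
  | (qi, s1, s2, .L, qj) =>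
      .par
        (.rep (.inp (finInputPat1 l l1 r r1 (qi, s1, s2, .L, qj))
          (.out (.comp (.name qj)
            (.comp (.name l) (.comp (.name l1) (.comp (.name s2) (.name r))))) .nil)))
        (.rep (.inp (finInputPat2 e l l1 r r1 (qi, s1, s2, .L, qj))
          (.out (.comp (.name qj)
            (.comp (.name e) (.comp (.name b) (.comp (.name s2) (.name r))))) .nil)))
  | (qi, s1, s2, .R, qj) =>
      .par
        (.rep (.inp (finInputPat1 l l1 r r1 (qi, s1, s2, .R, qj))
          (.out (.comp (.name qj)
            (.comp (.comp (.name s2) (.name l)) (.comp (.name r1) (.name r)))) .nil)))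
        (.rep (.inp (finInputPat2 e l l1 r r1 (qi, s1, s2, .R, qj))
          (.out (.comp (.name qj)
            (.comp (.comp (.name s2) (.name l)) (.comp (.name b) (.name e)))) .nil)))

/-- Finite encoding `[[F]] = ∏_{u ∈ F} [[u]]` of the transition function. -/
def encodeTransFin (b e l l1 r r1 : Name) (F : Finset Tuple) : Proc :=
  bigPar (F.toList.map (encodeTupleFin b e l l1 r r1))

/-- Finite encoding of a Turing Machine configuration. -/
def encodeTMFin (e l l1 r r1 : Name) (M : Machine) (T : Tape) (q : Name) : Proc :=
  .par (.out (.comp (.name q) (encodeTapeFin M.blank e T)) .nil)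
    (encodeTransFin M.blank e l l1 r r1 M.trans)

/-- The five reserved names (including the edge name `e`) are pairwise distinct
and do not appear among the symbols of the machine. -/
def ReservedFin (M : Machine) (e l l1 r r1 : Name) : Prop :=
  Reserved M l l1 r r1 ∧ e ∉ M.symbols ∧ e ≠ l ∧ e ≠ l1 ∧ e ≠ r ∧ e ≠ r1

end ACPC

/-! ## Synchronous polyadic π-calculus (with a name-matching conditional),
with possibly infinite (coinductive) processes, so that the chained-channel
encoding of an infinite tape can be expressed. -/

namespace ACPC

/-- Head shapes of π-calculus processes. -/
inductive PiHead : Type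
  | nil
  | par
  | rep
  | res (n : Name)
  | inp (a : Name) (xs : List Name)
  | out (a : Name) (bs : List Name)
  | ite (m n : Name)

/-- Arities of the head shapes. -/
def PiB : PiHead → Type
  | .nil => Empty
  | .par => Bool
  | .rep => Unit
  | .res _ => Unit
  | .inp _ _ => Unit
  | .out _ _ => Unit
  | .ite _ _ => Bool

/-- Shape functor for π-calculus processes. -/
def PiP : PFunctor.{0} := ⟨PiHead, PiB⟩

/-- π-calculus processes (possibly infinite coinductive trees). -/
def PiProc : Type := PiP.M

namespace PiProc

def nil : PiProc := PFunctor.M.mk ⟨.nil, fun e => e.elim⟩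
def par (P Q : PiProc) : PiProc := PFunctor.M.mk ⟨.par, fun b => bif b then Q else P⟩
def rep (P : PiProc) : PiProc := PFunctor.M.mk ⟨.rep, fun _ => P⟩
def res (n : Name) (P : PiProc) : PiProc := PFunctor.M.mk ⟨.res n, fun _ => P⟩
/-- Input `a(x̃).P`. -/
def inp (a : Name) (xs : List Name) (P : PiProc) : PiProc :=
  PFunctor.M.mk ⟨.inp a xs, fun _ => P⟩
/-- Output `ā⟨b̃⟩.P`. -/
def out (a : Name) (bs : List Name) (P : PiProc) : PiProc :=
  PFunctor.M.mk ⟨.out a bs, fun _ => P⟩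
/-- The name-matching conditional `if m = n then P else Q`. -/
def ite (m n : Name) (P Q : PiProc) : PiProc :=
  PFunctor.M.mk ⟨.ite m n, fun b => bif b then Q else P⟩

end PiProc

/-- `PiFree n P` : the name `n` is free in the π process `P`. -/
inductive PiFree : Name → PiProc → Prop
  | par_l {n : Name} {P Q : PiProc} : PiFree n P → PiFree n (PiProc.par P Q)
  | par_r {n : Name} {P Q : PiProc} : PiFree n Q → PiFree n (PiProc.par P Q)
  | rep {n : Name} {P : PiProc} : PiFree n P → PiFree n (PiProc.rep P)
  | res {n m : Name} {P : PiProc} : PiFree n P → n ≠ m → PiFree n (PiProc.res m P)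
  | inp_chan {a : Name} {xs : List Name} {P : PiProc} : PiFree a (PiProc.inp a xs P)
  | inp_body {n a : Name} {xs : List Name} {P : PiProc} :
      PiFree n P → n ∉ xs → PiFree n (PiProc.inp a xs P)
  | out_chan {a : Name} {bs : List Name} {P : PiProc} : PiFree a (PiProc.out a bs P)
  | out_arg {n a : Name} {bs : List Name} {P : PiProc} :
      n ∈ bs → PiFree n (PiProc.out a bs P)
  | out_body {n a : Name} {bs : List Name} {P : PiProc} :
      PiFree n P → PiFree n (PiProc.out a bs P)
  | ite_l {m n : Name} {P Q : PiProc} : PiFree m (PiProc.ite m n P Q)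
  | ite_r {m n : Name} {P Q : PiProc} : PiFree n (PiProc.ite m n P Q)
  | ite_then {k m n : Name} {P Q : PiProc} : PiFree k P → PiFree k (PiProc.ite m n P Q)
  | ite_else {k m n : Name} {P Q : PiProc} : PiFree k Q → PiFree k (PiProc.ite m n P Q)

/-- Free names of a π process. -/
def PiProc.fn (P : PiProc) : Set Name := {n | PiFree n P}

def piRenameStep (f : Name → Name) (P : PiProc) : PiP.Obj PiProc :=
  match PFunctor.M.dest P with
  | ⟨.nil, g⟩ => ⟨.nil, g⟩
  | ⟨.par, g⟩ => ⟨.par, g⟩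
  | ⟨.rep, g⟩ => ⟨.rep, g⟩
  | ⟨.res n, g⟩ => ⟨.res (f n), g⟩
  | ⟨.inp a xs, g⟩ => ⟨.inp (f a) (xs.map f), g⟩
  | ⟨.out a bs, g⟩ => ⟨.out (f a) (bs.map f), g⟩
  | ⟨.ite m n, g⟩ => ⟨.ite (f m) (f n), g⟩

/-- Rename all names of a π process (including binders). -/
def PiProc.rename (f : Name → Name) (P : PiProc) : PiProc :=
  PFunctor.M.corec (piRenameStep f) P

/-- π-calculus substitutions: partial maps from names to names. -/
def PiSubst : Type := Name → Option Name

/-- Apply a substitution to one name. -/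
def PiSubst.app (σ : PiSubst) (n : Name) : Name := (σ n).getD n

/-- Remove a set of names from the domain of a substitution. -/
def PiSubst.removeSet (σ : PiSubst) (s : Set Name) : PiSubst :=
  fun n => if n ∈ s then none else σ n

/-- The substitution `{b̃/x̃}`. -/
def piListSubst (xs bs : List Name) : PiSubst := fun n => (xs.zip bs).lookup n

def piSubstStep : PiProc × PiSubst → PiP.Obj (PiProc × PiSubst)
  | (P, σ) =>
    match PFunctor.M.dest P with
    | ⟨.nil, _⟩ => ⟨.nil, fun e => e.elim⟩
    | ⟨.par, g⟩ => ⟨.par, fun b => (g b, σ)⟩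
    | ⟨.rep, g⟩ => ⟨.rep, fun u => (g u, σ)⟩
    | ⟨.res n, g⟩ => ⟨.res n, fun u => (g u, σ.removeSet {n})⟩
    | ⟨.inp a xs, g⟩ => ⟨.inp (σ.app a) xs, fun u => (g u, σ.removeSet {n | n ∈ xs})⟩
    | ⟨.out a bs, g⟩ => ⟨.out (σ.app a) (bs.map σ.app), fun u => (g u, σ)⟩
    | ⟨.ite m n, g⟩ => ⟨.ite (σ.app m) (σ.app n), fun b => (g b, σ)⟩

/-- Apply a substitution to a π process (binders shadow the substitution). -/
def PiProc.subst (σ : PiSubst) (P : PiProc) : PiProc :=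
  PFunctor.M.corec piSubstStep (P, σ)

/-- α-conversion for π processes. -/
inductive PiAlpha : PiProc → PiProc → Prop
  | res {a b : Name} {P : PiProc} :
      b ∉ P.fn → PiAlpha (PiProc.res a P) (PiProc.res b (P.rename (transp a b)))
  | inp {a x b : Name} {xs : List Name} {P : PiProc} :
      x ∈ xs → b ∉ xs → b ∉ (PiProc.inp a xs P).fn →
      PiAlpha (PiProc.inp a xs P)
        (PiProc.inp a (xs.map (transp x b)) (P.rename (transp x b)))

/-- Structural equivalence of π processes (including the resolution rules of
the name-matching conditional). -/
inductive PiStructEq : PiProc → PiProc → Prop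
  | refl (P) : PiStructEq P P
  | symm {P Q} : PiStructEq P Q → PiStructEq Q P
  | trans {P Q R} : PiStructEq P Q → PiStructEq Q R → PiStructEq P R
  | alpha {P Q} : PiAlpha P Q → PiStructEq P Q
  | par_nil (P) : PiStructEq (PiProc.par P PiProc.nil) P
  | par_comm (P Q) : PiStructEq (PiProc.par P Q) (PiProc.par Q P)
  | par_assoc (P Q R) :
      PiStructEq (PiProc.par P (PiProc.par Q R)) (PiProc.par (PiProc.par P Q) R)
  | res_nil (a) : PiStructEq (PiProc.res a PiProc.nil) PiProc.nil
  | res_res (a b P) : PiStructEq (PiProc.res a (PiProc.res b P)) (PiProc.res b (PiProc.res a P))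
  | res_par {a : Name} (P Q) :
      a ∉ PiProc.fn P → PiStructEq (PiProc.par P (PiProc.res a Q)) (PiProc.res a (PiProc.par P Q))
  | rep (P) : PiStructEq (PiProc.rep P) (PiProc.par P (PiProc.rep P))
  | ite_eq (m : Name) (P Q) : PiStructEq (PiProc.ite m m P Q) P
  | ite_ne {m n : Name} (P Q) : m ≠ n → PiStructEq (PiProc.ite m n P Q) Q
  | par_congr {P P' Q Q'} :
      PiStructEq P P' → PiStructEq Q Q' → PiStructEq (PiProc.par P Q) (PiProc.par P' Q')
  | res_congr {P P'} (a) : PiStructEq P P' → PiStructEq (PiProc.res a P) (PiProc.res a P')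
  | rep_congr {P P'} : PiStructEq P P' → PiStructEq (PiProc.rep P) (PiProc.rep P')
  | inp_congr {P P'} (a xs) : PiStructEq P P' → PiStructEq (PiProc.inp a xs P) (PiProc.inp a xs P')
  | out_congr {P P'} (a bs) : PiStructEq P P' → PiStructEq (PiProc.out a bs P) (PiProc.out a bs P')
  | ite_congr {P P' Q Q'} (m n) :
      PiStructEq P P' → PiStructEq Q Q' →
      PiStructEq (PiProc.ite m n P Q) (PiProc.ite m n P' Q')

/-- Reduction of π processes:
`m̄⟨b̃⟩.P | n(x̃).Q → P | {b̃/x̃}Q` when `m = n` and `|b̃| = |x̃|`,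
closed under parallel, restriction and structural equivalence. -/
inductive PiReduces : PiProc → PiProc → Prop
  | comm {a : Name} {bs xs : List Name} {P Q : PiProc} :
      bs.length = xs.length →
      PiReduces (PiProc.par (PiProc.out a bs P) (PiProc.inp a xs Q))
        (PiProc.par P (Q.subst (piListSubst xs bs)))
  | par {P P'} (Q) : PiReduces P P' → PiReduces (PiProc.par P Q) (PiProc.par P' Q)
  | res {P P'} (n) : PiReduces P P' → PiReduces (PiProc.res n P) (PiProc.res n P')
  | struct {P P' Q Q'} :
      PiStructEq P P' → PiReduces P' Q' → PiStructEq Q' Q → PiReduces P Q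

/-! ### The chained-channel encoding of Turing Machines into the π-calculus -/

/-- States of the corecursion generating the encoding of one side of the tape:
the infinite nesting `(ν x_k)( c̄ₖ⟨s_k, x_k⟩ | … )`. -/
inductive ChainSt : Type
  | start (c : Name) (k : ℕ)
  | inside (c : Name) (k : ℕ)
  | output (c : Name) (k : ℕ)
  | done

def chainStep (f x : ℕ → Name) : ChainSt → PiP.Obj ChainSt
  | .start c k => ⟨.res (x k), fun _ => ChainSt.inside c k⟩
  | .inside c k => ⟨.par, fun b => bif b then ChainSt.start (x k) (k + 1) else ChainSt.output c k⟩
  | .output c k => ⟨.out c [f k, x k], fun _ => ChainSt.done⟩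
  | .done => ⟨.nil, fun e => e.elim⟩

/-- The chained-channel encoding of one side of the tape (listed from the head
outward): each cell is output, on the channel of that cell, together with a
fresh (restricted) channel `x k` for the next cell:
`⟦…⟧ = (νx₁) ( c̄⟨s₁,x₁⟩ | (νx₂) ( x̄₁⟨s₂,x₂⟩ | … ) )`. -/
def chain (f x : ℕ → Name) (c : Name) : PiProc :=
  PFunctor.M.corec (chainStep f x) (ChainSt.start c 0)

/-- Encoding of the current state and tape:
`⟦T⟧_{q} = q s_h⟨l,r⟩.0 | ⟦left⟧_L | ⟦right⟧_R`, where `ch q s` is the distinct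
channel name reserved for the pair of state `q` and symbol `s`. -/
def piEncodeTape (ch : Name → Name → Name) (l r : Name) (xL xR : ℕ → Name)
    (T : Tape) (q : Name) : PiProc :=
  PiProc.par (PiProc.out (ch q T.head) [l, r] PiProc.nil)
    (PiProc.par (chain T.left xL l) (chain T.right xR r))

/-- The cascade of name-matching conditionals detecting the new head symbol. -/
def iteChain (ch : Name → Name → Name) (qj sc l1 r1 : Name) : List Name → PiProc
  | [] => PiProc.nil
  | s :: ss => PiProc.ite sc s (PiProc.out (ch qj s) [l1, r1] PiProc.nil)
      (iteChain ch qj sc l1 r1 ss)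

/-- π encoding of a transition tuple (`syms` enumerates the alphabet `S`). -/
def piEncodeTuple (ch : Name → Name → Name) (lc rc sc l1 r1 : Name)
    (syms : List Name) : Tuple → PiProc
  | (qi, s1, s2, .L, qj) =>
      PiProc.inp (ch qi s1) [lc, rc]
        (PiProc.inp lc [sc, l1]
          (PiProc.res r1
            (PiProc.par (iteChain ch qj sc l1 r1 syms)
              (PiProc.out r1 [s2, rc] PiProc.nil))))
  | (qi, s1, s2, .R, qj) =>
      PiProc.inp (ch qi s1) [lc, rc]
        (PiProc.inp rc [sc, r1]
          (PiProc.res l1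
            (PiProc.par (iteChain ch qj sc l1 r1 syms)
              (PiProc.out l1 [s2, lc] PiProc.nil))))

/-- Parallel composition of a list of π processes. -/
def piBigPar : List PiProc → PiProc
  | [] => PiProc.nil
  | P :: Ps => PiProc.par P (piBigPar Ps)

/-- π encoding `⟦F⟧ = ∏_{u ∈ F} !⟦u⟧` of the transition function. -/
def piEncodeTrans (ch : Name → Name → Name) (lc rc sc l1 r1 : Name)
    (syms : List Name) (F : Finset Tuple) : PiProc :=
  piBigPar (F.toList.map fun u => PiProc.rep (piEncodeTuple ch lc rc sc l1 r1 syms u))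

/-- π encoding of a Turing Machine configuration:
`⟦(S,Q,F,T,q)⟧ = (νl)(νr)( ⟦T⟧_q | ⟦F⟧ )`. -/
def piEncodeTM (ch : Name → Name → Name) (l r : Name) (xL xR : ℕ → Name)
    (lc rc sc l1 r1 : Name) (M : Machine) (T : Tape) (q : Name) : PiProc :=
  PiProc.res l (PiProc.res r
    (PiProc.par (piEncodeTape ch l r xL xR T q)
      (piEncodeTrans ch lc rc sc l1 r1 M.symbols.toList M.trans)))

/-- The channel names `ch q s` (one for each pair of a state and a symbol), the
names `l`, `r` and the fresh chaining names `xL i`, `xR i` are all distinct and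
reserved (not among the symbols and states of the machine). -/
def PiFreshBase (M : Machine) (ch : Name → Name → Name) (l r : Name)
    (xL xR : ℕ → Name) : Prop :=
  (∀ q s q' s', ch q s = ch q' s' → q = q' ∧ s = s') ∧
  (∀ q s, ch q s ∉ M.symbols ∧ ch q s ∉ M.states ∧ ch q s ≠ l ∧ ch q s ≠ r ∧
    (∀ i, ch q s ≠ xL i ∧ ch q s ≠ xR i)) ∧
  l ≠ r ∧ l ∉ M.symbols ∧ l ∉ M.states ∧ r ∉ M.symbols ∧ r ∉ M.states ∧
  Function.Injective xL ∧ Function.Injective xR ∧ (∀ i j, xL i ≠ xR j) ∧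
  (∀ i, xL i ∉ M.symbols ∧ xL i ∉ M.states ∧ xL i ≠ l ∧ xL i ≠ r) ∧
  (∀ i, xR i ∉ M.symbols ∧ xR i ∉ M.states ∧ xR i ≠ l ∧ xR i ≠ r)

/-- The five binder names used in the encoding of transition tuples are
pairwise distinct and reserved. -/
def PiFreshBinders (M : Machine) (ch : Name → Name → Name) (l r : Name)
    (xL xR : ℕ → Name) (lc rc sc l1 r1 : Name) : Prop :=
  [lc, rc, sc, l1, r1].Nodup ∧
  ∀ n ∈ [lc, rc, sc, l1, r1], n ∉ M.symbols ∧ n ∉ M.states ∧ n ≠ l ∧ n ≠ r ∧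
    (∀ i, n ≠ xL i ∧ n ≠ xR i) ∧ (∀ q s, n ≠ ch q s)



/-! ### Auxiliary development: active-input-free processes cannot reduce -/

/-- Active children of a π process: children not guarded by a prefix,
selecting the appropriate branch of a conditional. -/
def ActChild (P Q : PiProc) : Prop :=
  match PFunctor.M.dest P with
  | ⟨.par, g⟩ => Q = g false ∨ Q = g true
  | ⟨.rep, g⟩ => Q = g ()
  | ⟨.res _, g⟩ => Q = g ()
  | ⟨.ite m n, g⟩ => Q = if m = n then g false else g true
  | ⟨.nil, _⟩ => False
  | ⟨.inp _ _, _⟩ => False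
  | ⟨.out _ _, _⟩ => False

/-- Active reachability. -/
inductive ActReach : PiProc → PiProc → Prop
  | refl (P) : ActReach P P
  | step {P Q R} : ActChild P Q → ActReach Q R → ActReach P R

/-- No active input occurs in the process. -/
def NoAct (P : PiProc) : Prop :=
  ∀ Q, ActReach P Q → ∀ a xs, (PFunctor.M.dest Q).1 ≠ PiHead.inp a xs

lemma noAct_iff (P : PiProc) :
    NoAct P ↔ (∀ a xs, (PFunctor.M.dest P).1 ≠ PiHead.inp a xs) ∧
      ∀ Q, ActChild P Q → NoAct Q := by
  constructor
  · intro h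
    exact ⟨h P (.refl P), fun Q hc R hR a xs => h R (.step hc hR) a xs⟩
  · rintro ⟨h1, h2⟩ Q hQ
    cases hQ with
    | refl => exact h1
    | step hc h' => exact h2 _ hc _ h'

lemma actChild_par {A B Q : PiProc} :
    ActChild (PiProc.par A B) Q ↔ (Q = A ∨ Q = B) := by
  exact Iff.rfl

lemma actChild_rep {A Q : PiProc} : ActChild (PiProc.rep A) Q ↔ Q = A := by
  exact Iff.rfl

lemma actChild_res {n : Name} {A Q : PiProc} : ActChild (PiProc.res n A) Q ↔ Q = A := by
  exact Iff.rfl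

lemma actChild_out {a : Name} {bs : List Name} {A Q : PiProc} :
    ¬ ActChild (PiProc.out a bs A) Q := by
  simp only [ActChild, PiProc.out, PFunctor.M.dest_mk]
  exact fun h => h

lemma actChild_nil {Q : PiProc} : ¬ ActChild PiProc.nil Q := by
  simp only [ActChild, PiProc.nil, PFunctor.M.dest_mk]
  exact fun h => h

lemma actChild_inp {a : Name} {xs : List Name} {A Q : PiProc} :
    ¬ ActChild (PiProc.inp a xs A) Q := by
  simp only [ActChild, PiProc.inp, PFunctor.M.dest_mk]
  exact fun h => h

lemma actChild_ite {m n : Name} {A B Q : PiProc} :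
    ActChild (PiProc.ite m n A B) Q ↔ Q = if m = n then A else B := by
  exact Iff.rfl

lemma noAct_nil : NoAct PiProc.nil := by
  rw [noAct_iff]
  refine ⟨?_, fun Q hc => absurd hc actChild_nil⟩
  intro a xs h; cases h

lemma noAct_par {A B : PiProc} : NoAct (PiProc.par A B) ↔ NoAct A ∧ NoAct B := by
  rw [noAct_iff]
  constructor
  · rintro ⟨-, h2⟩
    exact ⟨h2 A (actChild_par.2 (Or.inl rfl)), h2 B (actChild_par.2 (Or.inr rfl))⟩
  · rintro ⟨hA, hB⟩
    refine ⟨(by intro a xs h; cases h), fun Q hc => ?_⟩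
    rcases actChild_par.1 hc with rfl | rfl
    · exact hA
    · exact hB

lemma noAct_rep {A : PiProc} : NoAct (PiProc.rep A) ↔ NoAct A := by
  rw [noAct_iff]
  constructor
  · rintro ⟨-, h2⟩; exact h2 A (actChild_rep.2 rfl)
  · intro hA
    refine ⟨(by intro a xs h; cases h), fun Q hc => ?_⟩
    rcases actChild_rep.1 hc with rfl; exact hA

lemma noAct_res {n : Name} {A : PiProc} : NoAct (PiProc.res n A) ↔ NoAct A := by
  rw [noAct_iff]
  constructor
  · rintro ⟨-, h2⟩; exact h2 A (actChild_res.2 rfl)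
  · intro hA
    refine ⟨(by intro a xs h; cases h), fun Q hc => ?_⟩
    rcases actChild_res.1 hc with rfl; exact hA

lemma noAct_out {a : Name} {bs : List Name} {A : PiProc} : NoAct (PiProc.out a bs A) := by
  rw [noAct_iff]
  exact ⟨(by intro a xs h; cases h), fun Q hc => absurd hc actChild_out⟩

lemma noAct_inp {a : Name} {xs : List Name} {A : PiProc} :
    ¬ NoAct (PiProc.inp a xs A) := by
  intro h
  exact h _ (.refl _) a xs rfl

lemma noAct_ite {m n : Name} {A B : PiProc} :
    NoAct (PiProc.ite m n A B) ↔ NoAct (if m = n then A else B) := by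
  rw [noAct_iff]
  constructor
  · rintro ⟨-, h2⟩; exact h2 _ (actChild_ite.2 rfl)
  · intro hA
    refine ⟨(by intro a xs h; cases h), fun Q hc => ?_⟩
    rcases actChild_ite.1 hc with rfl; exact hA

/-! #### Renaming by an injective function preserves `NoAct` -/

lemma dest_rename (f : Name → Name) (P : PiProc) :
    PFunctor.M.dest (P.rename f) =
      (PiP.map (PiProc.rename f)) (piRenameStep f P) := by
  exact PFunctor.M.dest_corec _ _

lemma actChild_rename_iff {f : Name → Name} (hf : Function.Injective f)
    {P Q : PiProc} : ActChild (P.rename f) Q ↔ ∃ Q', ActChild P Q' ∧ Q = Q'.rename f := by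
  rcases hd : PFunctor.M.dest P with ⟨h, g⟩
  have hR := dest_rename f P
  cases h with
  | nil =>
      have hstep : piRenameStep f P = ⟨.nil, g⟩ := by simp only [piRenameStep, hd]; exact rfl
      erw [hstep, PFunctor.map_eq] at hR
      simp [ActChild, hR, hd]
  | par =>
      have hstep : piRenameStep f P = ⟨.par, g⟩ := by simp only [piRenameStep, hd]; exact rfl
      erw [hstep, PFunctor.map_eq] at hR
      simp only [ActChild, hR, hd, Function.comp]
      constructor
      · rintro (rfl | rfl)
        · exact ⟨g false, Or.inl rfl, rfl⟩
        · exact ⟨g true, Or.inr rfl, rfl⟩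
      · rintro ⟨Q', (rfl | rfl), rfl⟩
        · exact Or.inl rfl
        · exact Or.inr rfl
  | rep =>
      have hstep : piRenameStep f P = ⟨.rep, g⟩ := by simp only [piRenameStep, hd]; exact rfl
      erw [hstep, PFunctor.map_eq] at hR
      simp only [ActChild, hR, hd, Function.comp]
      constructor
      · rintro rfl; exact ⟨g (), rfl, rfl⟩
      · rintro ⟨Q', rfl, rfl⟩; rfl
  | res n =>
      have hstep : piRenameStep f P = ⟨.res (f n), g⟩ := by simp only [piRenameStep, hd]; exact rfl
      erw [hstep, PFunctor.map_eq] at hR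
      simp only [ActChild, hR, hd, Function.comp]
      constructor
      · rintro rfl; exact ⟨g (), rfl, rfl⟩
      · rintro ⟨Q', rfl, rfl⟩; rfl
  | inp a xs =>
      have hstep : piRenameStep f P = ⟨.inp (f a) (xs.map f), g⟩ := by
        simp only [piRenameStep, hd]; exact rfl
      erw [hstep, PFunctor.map_eq] at hR
      simp [ActChild, hR, hd]
  | out a bs =>
      have hstep : piRenameStep f P = ⟨.out (f a) (bs.map f), g⟩ := by
        simp only [piRenameStep, hd]; exact rfl
      erw [hstep, PFunctor.map_eq] at hR
      simp [ActChild, hR, hd]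
  | ite m n =>
      have hstep : piRenameStep f P = ⟨.ite (f m) (f n), g⟩ := by simp only [piRenameStep, hd]; exact rfl
      erw [hstep, PFunctor.map_eq] at hR
      simp only [ActChild, hR, hd, Function.comp]
      have hmn : (f m = f n) ↔ (m = n) := ⟨fun h => hf h, fun h => by rw [h]⟩
      by_cases h : m = n
      · erw [if_pos (hmn.2 h)]
        constructor
        · rintro rfl; exact ⟨g false, by simp [h]; exact rfl, rfl⟩
        · rintro ⟨Q', hQ', rfl⟩; simp only [if_pos h] at hQ'; rw [hQ']
      · erw [if_neg (fun hh => h (hmn.1 hh))]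
        constructor
        · rintro rfl; exact ⟨g true, by simp [h]; exact rfl, rfl⟩
        · rintro ⟨Q', hQ', rfl⟩; simp only [if_neg h] at hQ'; rw [hQ']

lemma head_rename_inp {f : Name → Name} {P : PiProc} {a : Name} {xs : List Name}
    (h : (PFunctor.M.dest (P.rename f)).1 = PiHead.inp a xs) :
    ∃ a' xs', (PFunctor.M.dest P).1 = PiHead.inp a' xs' := by
  rcases hd : PFunctor.M.dest P with ⟨hh, g⟩
  have hR := dest_rename f P
  cases hh with
  | nil =>
      have hstep : piRenameStep f P = ⟨.nil, g⟩ := by simp only [piRenameStep, hd]; exact rfl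
      erw [hstep, PFunctor.map_eq] at hR; rw [hR] at h; cases h
  | par =>
      have hstep : piRenameStep f P = ⟨.par, g⟩ := by simp only [piRenameStep, hd]; exact rfl
      erw [hstep, PFunctor.map_eq] at hR; rw [hR] at h; cases h
  | rep =>
      have hstep : piRenameStep f P = ⟨.rep, g⟩ := by simp only [piRenameStep, hd]; exact rfl
      erw [hstep, PFunctor.map_eq] at hR; rw [hR] at h; cases h
  | res n =>
      have hstep : piRenameStep f P = ⟨.res (f n), g⟩ := by simp only [piRenameStep, hd]; exact rfl
      erw [hstep, PFunctor.map_eq] at hR; rw [hR] at h; cases h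
  | inp a' xs' => exact ⟨a', xs', by simp [hd]; exact rfl⟩
  | out a' bs =>
      have hstep : piRenameStep f P = ⟨.out (f a') (bs.map f), g⟩ := by
        simp only [piRenameStep, hd]; exact rfl
      erw [hstep, PFunctor.map_eq] at hR; rw [hR] at h; cases h
  | ite m n =>
      have hstep : piRenameStep f P = ⟨.ite (f m) (f n), g⟩ := by simp only [piRenameStep, hd]; exact rfl
      erw [hstep, PFunctor.map_eq] at hR; rw [hR] at h; cases h

lemma head_inp_rename {f : Name → Name} {P : PiProc} {a : Name} {xs : List Name}
    (h : (PFunctor.M.dest P).1 = PiHead.inp a xs) :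
    (PFunctor.M.dest (P.rename f)).1 = PiHead.inp (f a) (xs.map f) := by
  rcases hd : PFunctor.M.dest P with ⟨hh, g⟩
  rw [hd] at h
  simp only at h
  subst h
  have hR := dest_rename f P
  have hstep : piRenameStep f P = ⟨.inp (f a) (xs.map f), g⟩ := by
    simp only [piRenameStep, hd]; exact rfl
  erw [hstep, PFunctor.map_eq] at hR
  rw [hR]

lemma actReach_rename_fwd {f : Name → Name} {P Q : PiProc} (h : ActReach P Q)
    (hf : Function.Injective f) : ActReach (P.rename f) (Q.rename f) := by
  induction h with
  | refl => exact .refl _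
  | step hc _ ih =>
      exact .step ((actChild_rename_iff hf).2 ⟨_, hc, rfl⟩) ih

lemma actReach_rename_inv {f : Name → Name} (hf : Function.Injective f)
    {R Q : PiProc} (h : ActReach R Q) :
    ∀ P : PiProc, R = P.rename f → ∃ Q', ActReach P Q' ∧ Q = Q'.rename f := by
  induction h with
  | refl X => intro P hP; exact ⟨P, .refl _, hP⟩
  | @step X Y Z hc _ ih =>
      intro P hP
      subst hP
      obtain ⟨Y', hY', rfl⟩ := (actChild_rename_iff hf).1 hc
      obtain ⟨Q', h1, h2⟩ := ih Y' rfl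
      exact ⟨Q', .step hY' h1, h2⟩

lemma noAct_rename {f : Name → Name} (hf : Function.Injective f) {P : PiProc} :
    NoAct (P.rename f) ↔ NoAct P := by
  constructor
  · intro h Q hQ a xs hhead
    exact h _ (actReach_rename_fwd hQ hf) (f a) (xs.map f) (head_inp_rename hhead)
  · intro h Q hQ a xs hhead
    obtain ⟨Q', hQ', rfl⟩ := actReach_rename_inv hf hQ P rfl
    obtain ⟨a', xs', h'⟩ := head_rename_inp hhead
    exact h _ hQ' a' xs' h'

/-! #### `NoAct` is invariant under structural equivalence -/

lemma structEq_noAct {P Q : PiProc} (h : PiStructEq P Q) : NoAct P ↔ NoAct Q := by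
  induction h with
  | refl P => rfl
  | symm _ ih => exact ih.symm
  | trans _ _ ih1 ih2 => exact ih1.trans ih2
  | alpha ha =>
      cases ha with
      | res hb =>
          rw [noAct_res, noAct_res, noAct_rename]
          intro x y hxy
          unfold transp at hxy
          split_ifs at hxy <;> subst_vars <;> simp_all
      | inp _ _ _ => simp [noAct_inp]
  | par_nil P => simp [noAct_par, noAct_nil]
  | par_comm P Q => simp [noAct_par, and_comm]
  | par_assoc P Q R => simp [noAct_par, and_assoc]
  | res_nil a => simp [noAct_res, noAct_nil]
  | res_res a b P => simp [noAct_res]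
  | res_par P Q _ => simp [noAct_par, noAct_res]
  | rep P => simp [noAct_rep, noAct_par]
  | ite_eq m P Q => simp [noAct_ite]
  | ite_ne P Q hmn => simp [noAct_ite, hmn]
  | par_congr _ _ ih1 ih2 => simp [noAct_par, ih1, ih2]
  | res_congr a _ ih => simp [noAct_res, ih]
  | rep_congr _ ih => simp [noAct_rep, ih]
  | inp_congr p _ => simp [noAct_inp]
  | out_congr t _ _ => simp [noAct_out]
  | ite_congr m n _ _ ih1 ih2 =>
      by_cases h : m = n <;> simp [noAct_ite, h, ih1, ih2]

lemma noAct_no_reduce {P Q : PiProc} (h : PiReduces P Q) : ¬ NoAct P := by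
  induction h with
  | comm _ => intro hP; exact noAct_inp (noAct_par.1 hP).2
  | par Q _ ih => intro hP; exact ih (noAct_par.1 hP).1
  | res n _ ih => intro hP; exact ih (noAct_res.1 hP)
  | struct h1 _ h2 ih => intro hP; exact ih ((structEq_noAct h1).1 hP)

/-! #### The tape encoding has no active input -/

lemma actReach_corec_inv {S : Type} (g : S → PiP.Obj S) {R Q : PiProc}
    (h : ActReach R Q) :
    ∀ s : S, R = PFunctor.M.corec g s → ∃ s', Q = PFunctor.M.corec g s' := by
  induction h with
  | refl X => intro s hs; exact ⟨s, hs⟩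
  | @step X Y Z hc _ ih =>
      intro s hs
      subst hs
      rcases hgs : g s with ⟨h, gg⟩
      have hd : PFunctor.M.dest (PFunctor.M.corec g s)
          = ⟨h, PFunctor.M.corec g ∘ gg⟩ := by
        rw [PFunctor.M.dest_corec, hgs, PFunctor.map_eq]
      have hY : ∃ s'', Y = PFunctor.M.corec g s'' := by
        cases h with
        | nil => simp only [ActChild, hd] at hc
        | par =>
            simp only [ActChild, hd, Function.comp] at hc
            rcases hc with rfl | rfl
            · exact ⟨gg false, rfl⟩
            · exact ⟨gg true, rfl⟩
        | rep =>
            simp only [ActChild, hd, Function.comp] at hc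
            exact ⟨gg (), hc⟩
        | res n =>
            simp only [ActChild, hd, Function.comp] at hc
            exact ⟨gg (), hc⟩
        | inp a xs => simp only [ActChild, hd] at hc
        | out a bs => simp only [ActChild, hd] at hc
        | ite m n =>
            simp only [ActChild, hd, Function.comp] at hc
            by_cases hmn : m = n
            · rw [if_pos hmn] at hc; exact ⟨gg false, hc⟩
            · rw [if_neg hmn] at hc; exact ⟨gg true, hc⟩
      obtain ⟨s'', rfl⟩ := hY
      exact ih s'' rfl

lemma noAct_corec {S : Type} (g : S → PiP.Obj S)
    (hg : ∀ s a xs, (g s).1 ≠ PiHead.inp a xs) (s : S) :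
    NoAct (PFunctor.M.corec g s) := by
  intro Q hQ a xs hhead
  obtain ⟨s', rfl⟩ := actReach_corec_inv g hQ s rfl
  rw [PFunctor.M.dest_corec] at hhead
  rcases hgs : g s' with ⟨h, gg⟩
  rw [hgs, PFunctor.map_eq] at hhead
  exact hg s' a xs (by rw [hgs]; exact hhead)

lemma noAct_chain (f x : ℕ → Name) (c : Name) : NoAct (chain f x c) :=
  noAct_corec _ (by rintro (⟨c,k⟩|⟨c,k⟩|⟨c,k⟩|_) a xs <;> simp [chainStep] <;> intro h <;> cases h) _

lemma noAct_piEncodeTape (ch : Name → Name → Name) (l r : Name) (xL xR : ℕ → Name)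
    (T : Tape) (q : Name) : NoAct (piEncodeTape ch l r xL xR T q) := by
  unfold piEncodeTape
  rw [noAct_par, noAct_par]
  exact ⟨noAct_out, noAct_chain _ _ _, noAct_chain _ _ _⟩

/-- In the encoding of Turing Machines into synchronous
polyadic π-calculus, the process
`q_i s_h⟨l,r⟩.0 | ⟦left⟧_L | ⟦right⟧_R` representing the current state and
tape does not reduce. -/
theorem pi_tape_representation_no_reduction (M : Machine)
    (ch : Name → Name → Name) (l r : Name) (xL xR : ℕ → Name)
    (hfresh : PiFreshBase M ch l r xL xR) (T : Tape) (qi : Name) :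
    ¬ ∃ Q : PiProc, PiReduces (piEncodeTape ch l r xL xR T qi) Q := by
  rintro ⟨Q, hQ⟩
  exact noAct_no_reduce hQ (noAct_piEncodeTape ch l r xL xR T qi)

end ACPC
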